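/- Let G be a finite group with irreducible complex representations π^k (1 ≤ k ≤ r) with matrix coefficients e^k_{ij} forming an orthonormal basis of L²(G). Let T be the linear map on L²(G) defined by T(e^k_{ij}) = e^k_{ji}. Then T is an involutive automorphism of L²(G) and for every g ∈ G, Tr(ρ_g ∘ T) = Σ_{k=1}^r χ_k(g), the Gelfand character of G, where ρ denotes the right regular representation of G on L²(G). -/

import Mathlib

/-- The right regular representation `(ρ g f) h = f (h * g)` on `L²(G) = G → ℂ`. -/
def rregRep {G : Type*} [Group G] (g : G) : (G → ℂ) →ₗ[ℂ] (G → ℂ) where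
  toFun f := fun h => f (h * g)
  map_add' _ _ := rfl
  map_smul' _ _ := rfl

/-- let `G` be a finite group whose irreducible (unitary) representations are
`π k` (`k = 1, …, r`), with matrix coefficients `e^k_{ij} = (π k ·) i j` forming a basis of
`L²(G)`.  If `T` is the linear map of `L²(G)` with `T (e^k_{ij}) = e^k_{ji}`, then `T` is an
involution and `Tr (ρ_g ∘ T) = Σ_k χ_k(g)` is the Gelfand character of `G`. -/
theorem gelfand_stmt1 {G : Type*} [Group G] [Fintype G] {r : ℕ} (n : Fin r → ℕ)
    (π : ∀ k : Fin r, G →* Matrix.unitaryGroup (Fin (n k)) ℂ)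
    (b : Module.Basis (Σ k : Fin r, Fin (n k) × Fin (n k)) ℂ (G → ℂ))
    (hb : ∀ p : Σ k : Fin r, Fin (n k) × Fin (n k),
      (b p : G → ℂ) =
        fun g => (π p.1 g : Matrix (Fin (n p.1)) (Fin (n p.1)) ℂ) p.2.1 p.2.2)
    (T : (G → ℂ) →ₗ[ℂ] (G → ℂ))
    (hT : ∀ (k : Fin r) (i j : Fin (n k)),
      T (fun g => (π k g : Matrix (Fin (n k)) (Fin (n k)) ℂ) i j) =
        fun g => (π k g : Matrix (Fin (n k)) (Fin (n k)) ℂ) j i) :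
    T ∘ₗ T = LinearMap.id ∧
    ∀ g : G, LinearMap.trace ℂ (G → ℂ) (rregRep g ∘ₗ T) =
      ∑ k : Fin r, Matrix.trace (π k g : Matrix (Fin (n k)) (Fin (n k)) ℂ) := by
  have hTb : ∀ p : Σ k : Fin r, Fin (n k) × Fin (n k),
      T (b p) = b ⟨p.1, (p.2.2, p.2.1)⟩ := by
    rintro ⟨k, i, j⟩
    rw [hb ⟨k, (i, j)⟩, hb ⟨k, (j, i)⟩]
    exact hT k i j
  constructor
  · apply b.ext
    intro p
    obtain ⟨k, i, j⟩ := p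
    simp [hTb ⟨k, (i, j)⟩, hTb ⟨k, (j, i)⟩]
  · intro g
    have key : ∀ p : Σ k : Fin r, Fin (n k) × Fin (n k),
        (rregRep g ∘ₗ T) (b p) =
          ∑ l : Fin (n p.1),
            ((π p.1 g : Matrix (Fin (n p.1)) (Fin (n p.1)) ℂ) l p.2.1) •
              b ⟨p.1, (p.2.2, l)⟩ := by
      rintro ⟨k, i, j⟩
      rw [LinearMap.comp_apply, hTb ⟨k, (i, j)⟩]
      funext h
      have hmul : (π k (h * g) : Matrix (Fin (n k)) (Fin (n k)) ℂ) j i =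
          ∑ l : Fin (n k), (π k h : Matrix (Fin (n k)) (Fin (n k)) ℂ) j l *
            (π k g : Matrix (Fin (n k)) (Fin (n k)) ℂ) l i := by
        rw [map_mul]
        exact Matrix.mul_apply
      simp only [rregRep, LinearMap.coe_mk, AddHom.coe_mk, Finset.sum_apply,
        Pi.smul_apply, smul_eq_mul]
      rw [hb ⟨k, (j, i)⟩]
      simp only [hmul]
      refine Finset.sum_congr rfl fun l _ => ?_
      rw [hb ⟨k, (j, l)⟩]
      ring
    rw [LinearMap.trace_eq_matrix_trace ℂ b, Matrix.trace]
    simp only [Matrix.diag, LinearMap.toMatrix_apply]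
    have hrepr : ∀ p : Σ k : Fin r, Fin (n k) × Fin (n k),
        b.repr ((rregRep g ∘ₗ T) (b p)) p =
          ∑ l : Fin (n p.1),
            ((π p.1 g : Matrix (Fin (n p.1)) (Fin (n p.1)) ℂ) l p.2.1) *
              (if (⟨p.1, (p.2.2, l)⟩ : Σ k : Fin r, Fin (n k) × Fin (n k)) = p
                then 1 else 0) := by
      intro p
      rw [key p]
      simp [Finsupp.single_apply]
    simp only [hrepr]
    rw [← Finset.univ_sigma_univ, Finset.sum_sigma]
    refine Finset.sum_congr rfl fun k _ => ?_
    rw [Fintype.sum_prod_type, Matrix.trace]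
    refine Finset.sum_congr rfl fun i _ => ?_
    simp [Sigma.ext_iff, Prod.ext_iff, mul_ite, heq_eq_eq, Matrix.diag,
      ite_and, Finset.sum_ite_eq, Finset.sum_ite_eq']
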